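/- In the mutilated DAG G^I obtained from a DAG G by deleting all edges into vertices of I, for v ∈ I and u ∉ I the following are equivalent: (a) there is a path between u and v in G^I that is active given the empty conditioning set (i.e., a path with no colliders), and (b) there is a directed path in G from v to u intersecting I only at v. -/

import Mathlib

open Relation

/-- Undirected adjacency induced by a directed edge relation. -/
def Adjacent {V : Type*} (E : V → V → Prop) (a b : V) : Prop := E a b ∨ E b a

/-- `x` is a collider on the path (vertex list) `p`: both neighboring edges point into `x`. -/
def IsCollider {V : Type*} (E : V → V → Prop) (p : List V) (x : V) : Prop :=
  ∃ l1 a b l2, p = l1 ++ a :: x :: b :: l2 ∧ E a x ∧ E b x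

/-- A path (vertex list) is active given a conditioning set `C`:
every collider is in `C` or has a descendant in `C`, and no non-collider is in `C`. -/
def ActivePath {V : Type*} (E : V → V → Prop) (C : Set V) (p : List V) : Prop :=
  (∀ x ∈ p, IsCollider E p x → ∃ d, ReflTransGen E x d ∧ d ∈ C) ∧
  (∀ x ∈ p, ¬ IsCollider E p x → x ∉ C)

/-- `p` is a path between `u` and `v`: consecutively adjacent, distinct vertices. -/
def IsPathBetween {V : Type*} (E : V → V → Prop) (u v : V) (p : List V) : Prop :=
  p.Chain' (Adjacent E) ∧ p.Nodup ∧ p.head? = some u ∧ p.getLast? = some v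

/-- `u` and `v` are d-connected given `C`. -/
def DConn {V : Type*} (E : V → V → Prop) (C : Set V) (u v : V) : Prop :=
  ∃ p, IsPathBetween E u v p ∧ ActivePath E C p

/-- `u` and `v` are d-separated given `C`. -/
def DSep {V : Type*} (E : V → V → Prop) (C : Set V) (u v : V) : Prop :=
  ¬ DConn E C u v

/-- `S` is a prefix (ancestrally closed) subset. -/
def IsPrefixSet {V : Type*} (E : V → V → Prop) (S : Set V) : Prop :=
  ∀ u v, E u v → v ∈ S → u ∈ S

/-- Source vertices of the induced subgraph on `T`: vertices of `T` with no parent in `T`. -/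
def srcOf {V : Type*} (E : V → V → Prop) (T : Set V) : Set V :=
  {v | v ∈ T ∧ ∀ u, E u v → u ∉ T}

/-- The edge relation is acyclic. -/
def Acyclic {V : Type*} (E : V → V → Prop) : Prop :=
  ∀ v, ¬ TransGen E v v

/-- `p` is a directed path from `u` to `v` (all edges forward). -/
def DirPath {V : Type*} (E : V → V → Prop) (u v : V) (p : List V) : Prop :=
  p.Chain' E ∧ p.head? = some u ∧ p.getLast? = some v

section Aux

variable {V : Type*} {E : V → V → Prop} {I : Set V}

open Relation

private lemma chain_transGen {a b : V} {l : List V} (h : List.Chain E a l) (hb : b ∈ l) :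
    TransGen E a b := by
  induction l generalizing a with
  | nil => simp at hb
  | cons c l ih =>
    rcases List.chain_cons.mp h with ⟨hac, hcl⟩
    rcases List.mem_cons.mp hb with rfl | hb
    · exact TransGen.single hac
    · exact TransGen.head hac (ih hcl hb)

private lemma nodup_of_chain' (hacyc : Acyclic E) {p : List V} (h : p.Chain' E) : p.Nodup := by
  induction p with
  | nil => simp
  | cons a l ih =>
    have hch : List.Chain E a l := h
    have htl : l.Chain' E := (List.isChain_cons.mp h).2
    refine List.nodup_cons.mpr ⟨fun hal => ?_, ih htl⟩
    exact hacyc a (chain_transGen hch hal)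

private lemma isCollider_of_reverse {p : List V} {x : V}
    (h : IsCollider E p.reverse x) : IsCollider E p x := by
  obtain ⟨l1, a, b, l2, heq, ha, hb⟩ := h
  refine ⟨l2.reverse, b, a, l1.reverse, ?_, hb, ha⟩
  have := congrArg List.reverse heq
  simpa using this

private lemma rel_of_decomp {R : V → V → Prop} {p l1 l2 : List V} {a x : V}
    (h : p.Chain' R) (heq : p = l1 ++ a :: x :: l2) : R a x := by
  subst heq
  have := (List.isChain_split.mp h).2
  exact (List.isChain_cons_cons.mp this).1

/-- A collider-free chain of adjacencies whose first edge is forward is fully directed. -/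
private lemma directed_of_noCollider :
    ∀ (l : List V) (a x : V), List.Chain' (Adjacent E) (a :: x :: l) → E a x →
      (∀ y, ¬ IsCollider E (a :: x :: l) y) → List.Chain' E (a :: x :: l) := by
  intro l
  induction l with
  | nil => intro a x _ hax _; exact List.isChain_cons_cons.mpr ⟨hax, List.isChain_singleton x⟩
  | cons b l ih =>
    intro a x hch hax hnc
    have hadj : Adjacent E x b := (List.isChain_cons_cons.mp (List.isChain_cons_cons.mp hch).2).1
    have hxb : E x b := by
      rcases hadj with h | h
      · exact h
      · exact absurd ⟨[], a, b, l, rfl, hax, h⟩ (hnc x)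
    have htail : List.Chain' E (x :: b :: l) := by
      refine ih x b (List.isChain_cons_cons.mp hch).2 hxb fun y hy => ?_
      obtain ⟨l1, a', b', l2, heq, ha', hb'⟩ := hy
      exact hnc y ⟨a :: l1, a', b', l2, by rw [heq]; rfl, ha', hb'⟩
    exact List.isChain_cons_cons.mpr ⟨hax, htail⟩

private lemma tail_not_mem_I {v : V} :
    ∀ (l : List V), List.Chain (fun a b => E a b ∧ b ∉ I) v l → ∀ x ∈ l, x ∉ I := by
  intro l
  induction l generalizing v with
  | nil => simp
  | cons c l ih =>
    intro h x hx
    rcases List.chain_cons.mp h with ⟨⟨_, hcI⟩, hcl⟩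
    rcases List.mem_cons.mp hx with rfl | hx
    · exact hcI
    · exact ih hcl x hx

private lemma chain_mutilated {v : V} :
    ∀ (l : List V), List.Chain E v l → (∀ x ∈ l, x ∉ I) →
      List.Chain (fun a b => E a b ∧ b ∉ I) v l := by
  intro l
  induction l generalizing v with
  | nil => intro _ _; exact List.Chain.nil
  | cons c l ih =>
    intro h hI
    rcases List.chain_cons.mp h with ⟨hvc, hcl⟩
    exact List.chain_cons.mpr ⟨⟨hvc, hI c List.mem_cons_self⟩,
      ih hcl fun x hx => hI x (List.mem_cons_of_mem c hx)⟩

end Aux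

/-- in the mutilated DAG `G^I` (all edges into `I` removed), for `v ∈ I`
and `u ∉ I`: `u` and `v` are d-connected given `∅` (i.e., joined by a collider-free path)
iff there is a directed path in `G` from `v` to `u` intersecting `I` only at `v`. -/

theorem mutilated_dconn_iff_dirPath {V : Type*} [Fintype V] (E : V → V → Prop)
    (hacyc : Acyclic E) (I : Set V) (u v : V) (hv : v ∈ I) (hu : u ∉ I) :
    DConn (fun a b => E a b ∧ b ∉ I) (∅ : Set V) u v ↔
      ∃ p, DirPath E v u p ∧ ∀ x ∈ p, x ∈ I → x = v := by
  constructor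
  · rintro ⟨p, ⟨hch, hnd, hh, hl⟩, hact⟩
    have hnc : ∀ y, ¬ IsCollider (fun a b => E a b ∧ b ∉ I) p y := by
      intro y hy
      have hyp : y ∈ p := by
        obtain ⟨l1, a, b, l2, heq, _, _⟩ := id hy
        rw [heq]; simp
      obtain ⟨d, _, hd⟩ := hact.1 y hyp hy
      exact hd
    have hqh : p.reverse.head? = some v := by rw [List.head?_reverse]; exact hl
    have hql : p.reverse.getLast? = some u := by rw [List.getLast?_reverse]; exact hh
    have hqch : List.Chain' (Adjacent fun a b => E a b ∧ b ∉ I) p.reverse :=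
      List.isChain_reverse.mpr (hch.imp fun a b h => h.symm)
    have hqnc : ∀ y, ¬ IsCollider (fun a b => E a b ∧ b ∉ I) p.reverse y :=
      fun y hy => hnc y (isCollider_of_reverse hy)
    cases hq : p.reverse with
    | nil => rw [hq] at hqh; simp at hqh
    | cons v0 rest =>
      rw [hq] at hqh hql hqch hqnc
      have hv0 : v0 = v := by simpa using hqh
      subst hv0
      cases rest with
      | nil =>
        simp at hql
        exact absurd hv (hql ▸ hu)
      | cons w l =>
        have hadj : Adjacent (fun a b => E a b ∧ b ∉ I) v0 w := (List.isChain_cons_cons.mp hqch).1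
        have hvw : E v0 w ∧ w ∉ I := by
          rcases hadj with h | h
          · exact h
          · exact absurd hv h.2
        have hdir : List.Chain' (fun a b => E a b ∧ b ∉ I) (v0 :: w :: l) :=
          directed_of_noCollider l v0 w hqch hvw hqnc
        refine ⟨v0 :: w :: l, ⟨hdir.imp fun a b h => h.1, by simp, hql⟩, ?_⟩
        intro x hx hxI
        rcases List.mem_cons.mp hx with rfl | hx
        · rfl
        · exact absurd hxI (tail_not_mem_I (w :: l) hdir x hx)
  · rintro ⟨p, ⟨hch, hh, hl⟩, hI⟩
    have hnd : p.Nodup := nodup_of_chain' hacyc hch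
    cases hp : p with
    | nil => rw [hp] at hh; simp at hh
    | cons v0 rest =>
      rw [hp] at hch hh hl hI hnd
      have hv0 : v0 = v := by simpa using hh
      subst hv0
      have hrest : ∀ x ∈ rest, x ∉ I := by
        intro x hx hxI
        have := hI x (List.mem_cons_of_mem v0 hx) hxI
        exact (List.nodup_cons.mp hnd).1 (this ▸ hx)
      have hchE' : List.Chain' (fun a b => E a b ∧ b ∉ I) (v0 :: rest) :=
        chain_mutilated rest hch hrest
      refine ⟨(v0 :: rest).reverse,
        ⟨List.isChain_reverse.mpr (hchE'.imp fun a b h => Or.inr h),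
          List.nodup_reverse.mpr hnd,
          by rw [List.head?_reverse]; exact hl,
          by rw [List.getLast?_reverse]; exact hh⟩, ?_, ?_⟩
      · intro x hx hcol
        exfalso
        obtain ⟨l1, a, b, l2, heq, ha, hb⟩ := hcol
        have hflip : List.Chain' (flip fun a b => E a b ∧ b ∉ I) (v0 :: rest).reverse :=
          List.isChain_reverse.mpr hchE'
        have hxa := rel_of_decomp hflip heq
        exact hacyc a (TransGen.head ha.1 (TransGen.single hxa.1))
      · intro x _ _
        simp
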